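/- Let 𝔖 = W[[u]] be the power series ring over the Witt vectors of a perfect field k of characteristic p, with Frobenius φ acting as the Witt Frobenius on W and u ↦ u^p, and let E(u) ∈ W[u] be an Eisenstein polynomial. Let 𝔐 be a finite free 𝔖-module with a map 1⊗φ: φ*𝔐 → 𝔐 whose cokernel is killed by E(u)² (height ≤ 2), and suppose 𝔐 admits a perfect 𝔖-bilinear pairing compatible with Frobenius (valued in 𝔖 with twist (−2)). Define 𝔐' = {x ∈ 𝔐 : E(u)x ∈ Im(1⊗φ)}. Then 𝔐/𝔐' is killed by E(u) and is p-torsion-free; consequently 𝔐/𝔐' is a finite free module over 𝔖/E(u) ≅ 𝒪_K. -/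

import Mathlib

set_option maxHeartbeats 1000000

open scoped PowerSeries

open PowerSeries

section AuxLemmas

/-- If `E` has nonzero constant coefficient (over a domain) and `E * h = X^n * g`,
then `X^n ∣ h`. -/
lemma stmt14aux_Edvd {R : Type*} [CommRing R] [IsDomain R] (Ee : R⟦X⟧)
    (h0 : constantCoeff (R := R) Ee ≠ 0) :
    ∀ (n : ℕ) (h g : R⟦X⟧), Ee * h = (X : R⟦X⟧) ^ n * g → (X : R⟦X⟧) ^ n ∣ h := by
  intro n
  induction n with
  | zero => intro h g _; simpa using dvd_refl h
  | succ n ih =>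
    intro h g heq
    have hc : constantCoeff (R := R) h = 0 := by
      have h1 := congrArg (constantCoeff (R := R)) heq
      simp only [map_mul, map_pow, constantCoeff_X, zero_pow (Nat.succ_ne_zero n),
        zero_mul] at h1
      exact (mul_eq_zero.mp h1).resolve_left h0
    obtain ⟨h1, rfl⟩ := PowerSeries.X_dvd_iff.mpr hc
    have hX : (X : R⟦X⟧) ≠ 0 := PowerSeries.X_ne_zero
    have heq' : Ee * h1 = (X : R⟦X⟧) ^ n * g := by
      apply mul_left_cancel₀ hX
      rw [show (X : R⟦X⟧) * (Ee * h1) = Ee * (X * h1) by ring, heq, pow_succ]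
      ring
    obtain ⟨t, ht⟩ := ih h1 g heq'
    exact ⟨t, by rw [ht, pow_succ]; ring⟩

/-- X-adic approximation: if `f` is congruent to a multiple of `X^n` modulo `Ee` for
all `n`, then `Ee ∣ f`. -/
lemma stmt14aux_inter {R : Type*} [CommRing R] [IsDomain R] (Ee f : R⟦X⟧)
    (h0 : constantCoeff (R := R) Ee ≠ 0)
    (H : ∀ n : ℕ, ∃ g h : R⟦X⟧, f = Ee * h + (X : R⟦X⟧) ^ n * g) : Ee ∣ f := by
  choose g h hgh using H
  have compat : ∀ m n : ℕ, m ≤ n → (X : R⟦X⟧) ^ m ∣ (h n - h m) := by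
    intro m n hmn
    apply stmt14aux_Edvd Ee h0 m _ (g m - (X : R⟦X⟧) ^ (n - m) * g n)
    have e1 := hgh m
    have e2 := hgh n
    have hxn : (X : R⟦X⟧) ^ n = X ^ m * X ^ (n - m) := by
      rw [← pow_add, Nat.add_sub_cancel' hmn]
    rw [hxn] at e2
    have := e1.symm.trans e2
    ring_nf
    ring_nf at this
    linear_combination -this
  refine ⟨PowerSeries.mk fun j => coeff (R := R) j (h (j + 1)), ?_⟩
  ext j
  have hd : (X : R⟦X⟧) ^ (j + 1) ∣ (PowerSeries.mk fun i => coeff (R := R) i (h (i + 1))) - h (j + 1) := by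
    rw [PowerSeries.X_pow_dvd_iff]
    intro m hm
    have := compat (m + 1) (j + 1) hm
    rw [PowerSeries.X_pow_dvd_iff] at this
    have hcoeff := this m (Nat.lt_succ_self m)
    rw [map_sub, sub_eq_zero] at hcoeff ⊢
    rw [PowerSeries.coeff_mk]
    exact hcoeff.symm
  obtain ⟨t, ht⟩ := hd
  have h2 : Ee * (PowerSeries.mk fun i => coeff (R := R) i (h (i + 1))) =
      f + (X : R⟦X⟧) ^ (j + 1) * (Ee * t - g (j + 1)) := by
    have hmk : (PowerSeries.mk fun i => coeff (R := R) i (h (i + 1))) = h (j + 1) + X ^ (j + 1) * t := by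
      rw [← ht]; ring
    rw [hmk, hgh (j + 1)]; ring
  have hz : ∀ u : R⟦X⟧, coeff (R := R) j ((X : R⟦X⟧) ^ (j + 1) * u) = 0 := by
    intro u
    have hdvd : (X : R⟦X⟧) ^ (j + 1) ∣ X ^ (j + 1) * u := Dvd.intro u rfl
    rw [PowerSeries.X_pow_dvd_iff] at hdvd
    exact hdvd j (Nat.lt_succ_self j)
  rw [h2, map_add, hz, add_zero]

/-- If every coefficient of `f` is divisible by `r`, then `C r ∣ f`. -/
lemma stmt14aux_Cdvd {R : Type*} [CommRing R] (r : R) (f : R⟦X⟧)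
    (h : ∀ n, r ∣ coeff (R := R) n f) : (PowerSeries.C (R := R) r) ∣ f := by
  choose t ht using h
  exact ⟨PowerSeries.mk t, by ext n; simp [PowerSeries.coeff_C_mul, ht n]⟩

end AuxLemmas

section Aux
variable {R : Type*} [CommRing R] [IsDomain R] [IsDiscreteValuationRing R]

theorem stmt14_aux (pp : R) (hp : Irreducible pp)
    (φ : R⟦X⟧ →+* R⟦X⟧)
    (E : Polynomial R) (hEmonic : E.Monic)
    (hEis : E.IsEisensteinAt (Ideal.span {pp}))
    (𝔐 : Type*) [AddCommGroup 𝔐] [Module R⟦X⟧ 𝔐]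
    [Module.Finite R⟦X⟧ 𝔐] [Module.Free R⟦X⟧ 𝔐]
    (F : 𝔐 →ₛₗ[φ] 𝔐)
    (hheight : ∀ x : 𝔐, ((E : R⟦X⟧) ^ 2) • x ∈ Submodule.span R⟦X⟧ (Set.range F))
    (B : 𝔐 →ₗ[R⟦X⟧] 𝔐 →ₗ[R⟦X⟧] R⟦X⟧)
    (hBperf : Function.Bijective B)
    (c : (R⟦X⟧)ˣ)
    (hBF : ∀ x y : 𝔐, B (F x) (F y) = (E : R⟦X⟧) ^ 2 * (c : R⟦X⟧) * φ (B x y))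
    (M' : Submodule R⟦X⟧ 𝔐)
    (hM' : ∀ x : 𝔐, x ∈ M' ↔ (E : R⟦X⟧) • x ∈ Submodule.span R⟦X⟧ (Set.range F)) :
    (∀ x : 𝔐, (E : R⟦X⟧) • x ∈ M') ∧
    (∀ x : 𝔐, (PowerSeries.C (R := R) pp) • x ∈ M' → x ∈ M') ∧
    (∃ h : Module.IsTorsionBySet R⟦X⟧ (𝔐 ⧸ M')
        ((Ideal.span {(E : R⟦X⟧)} : Ideal R⟦X⟧) : Set R⟦X⟧),
      @Module.Free (R⟦X⟧ ⧸ Ideal.span {(E : R⟦X⟧)}) (𝔐 ⧸ M') _ _ h.module ∧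
      @Module.Finite (R⟦X⟧ ⧸ Ideal.span {(E : R⟦X⟧)}) (𝔐 ⧸ M') _ _ h.module) := by
  classical
  have hppne : pp ≠ 0 := hp.ne_zero
  -- part 1
  have part1 : ∀ x : 𝔐, (E : R⟦X⟧) • x ∈ M' := by
    intro x
    rw [hM', smul_smul, ← pow_two]
    exact hheight x
  -- ====== the basis and matrices ======
  letI ι := Module.Free.ChooseBasisIndex R⟦X⟧ 𝔐
  letI b : Module.Basis ι R⟦X⟧ 𝔐 := Module.Free.chooseBasis R⟦X⟧ 𝔐
  have hmem : ∀ y : 𝔐, y ∈ Submodule.span R⟦X⟧ (Set.range F) ↔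
      ∃ w : ι → R⟦X⟧, ∑ j, w j • F (b j) = y := by
    have hspan : Submodule.span R⟦X⟧ (Set.range F) =
        Submodule.span R⟦X⟧ (Set.range fun j => F (b j)) := by
      apply le_antisymm
      · rw [Submodule.span_le]
        rintro _ ⟨x, rfl⟩
        rw [← b.sum_repr x, map_sum]
        apply Submodule.sum_mem
        intro j _
        rw [F.map_smulₛₗ]
        exact Submodule.smul_mem _ _ (Submodule.subset_span ⟨j, rfl⟩)
      · rw [Submodule.span_le]
        rintro _ ⟨j, rfl⟩
        exact Submodule.subset_span ⟨b j, rfl⟩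
    intro y
    rw [hspan, Submodule.mem_span_range_iff_exists_fun]
  letI A : Matrix ι ι R⟦X⟧ := Matrix.of (fun i j => b.repr (F (b j)) i)
  have hA : ∀ i j, A i j = b.repr (F (b j)) i := fun i j => rfl
  have hFb : ∀ j, F (b j) = ∑ i, A i j • b i := by
    intro j
    exact (b.sum_repr (F (b j))).symm
  letI G : Matrix ι ι R⟦X⟧ := Matrix.of (fun i j => B (b i) (b j))
  have hG : ∀ i j, G i j = B (b i) (b j) := fun i j => rfl
  have hGdet : IsUnit G.det := by
    letI Beq : 𝔐 ≃ₗ[R⟦X⟧] Module.Dual R⟦X⟧ 𝔐 := LinearEquiv.ofBijective B hBperf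
    have hcomp : (Beq.symm.toLinearMap.comp (B : 𝔐 →ₗ[R⟦X⟧] Module.Dual R⟦X⟧ 𝔐)) =
        LinearMap.id := by
      ext x
      exact Beq.symm_apply_apply x
    have hmat : (LinearMap.toMatrix b.dualBasis b Beq.symm.toLinearMap) *
        (LinearMap.toMatrix b b.dualBasis (B : 𝔐 →ₗ[R⟦X⟧] Module.Dual R⟦X⟧ 𝔐)) = 1 := by
      rw [← LinearMap.toMatrix_comp b b.dualBasis b, hcomp, LinearMap.toMatrix_id]
    have h1 : IsUnit (LinearMap.toMatrix b b.dualBasis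
        (B : 𝔐 →ₗ[R⟦X⟧] Module.Dual R⟦X⟧ 𝔐)).det := by
      apply IsUnit.of_mul_eq_one (LinearMap.toMatrix b.dualBasis b Beq.symm.toLinearMap).det
      rw [mul_comm, ← Matrix.det_mul, hmat, Matrix.det_one]
    have h2 : LinearMap.toMatrix b b.dualBasis (B : 𝔐 →ₗ[R⟦X⟧] Module.Dual R⟦X⟧ 𝔐) =
        G.transpose := by
      refine Matrix.ext fun i j => ?_
      rw [LinearMap.toMatrix_apply, Module.Basis.dualBasis_repr]
      simp [hG, Matrix.transpose_apply]
    rwa [h2, Matrix.det_transpose] at h1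
  have hdet : A.det ^ 2 * G.det =
      ((E : R⟦X⟧) ^ 2 * (c : R⟦X⟧)) ^ (Fintype.card ι) * φ G.det := by
    have hmat : A.transpose * G * A = ((E : R⟦X⟧) ^ 2 * (c : R⟦X⟧)) • G.map φ := by
      refine Matrix.ext fun i j => ?_
      have rhs : B (F (b i)) (F (b j)) = ∑ k, ∑ l, A k j * (A l i * G l k) := by
        rw [hFb i, hFb j, map_sum]
        simp only [map_smul, map_sum, LinearMap.coe_sum, Finset.sum_apply,
          LinearMap.smul_apply, smul_eq_mul, Finset.mul_sum]
        apply Finset.sum_congr rfl; intro k _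
        apply Finset.sum_congr rfl; intro l _
        rw [hG]
      have lhs : (A.transpose * G * A) i j = ∑ k, ∑ l, A k j * (A l i * G l k) := by
        simp only [Matrix.mul_apply, Matrix.transpose_apply, Finset.sum_mul]
        apply Finset.sum_congr rfl; intro k _
        apply Finset.sum_congr rfl; intro l _
        ring
      rw [lhs, ← rhs, hBF]
      simp only [Matrix.smul_apply, Matrix.map_apply, hG, smul_eq_mul]
    have hd := congrArg Matrix.det hmat
    rw [Matrix.det_mul, Matrix.det_mul, Matrix.det_transpose, Matrix.det_smul,
      ← RingHom.mapMatrix_apply, ← RingHom.map_det] at hd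
    rw [pow_two]
    linear_combination hd
  -- ====== reduction mod pp ======
  haveI : (Ideal.span {pp}).IsPrime := (Ideal.span_singleton_prime hppne).mpr
    (UniqueFactorizationMonoid.irreducible_iff_prime.mp hp)
  letI ρ : R⟦X⟧ →+* (R ⧸ Ideal.span {pp})⟦X⟧ :=
    PowerSeries.map (Ideal.Quotient.mk (Ideal.span {pp}))
  have hmkpp : Ideal.Quotient.mk (Ideal.span {pp}) pp = 0 :=
    Ideal.Quotient.eq_zero_iff_mem.mpr (Ideal.mem_span_singleton_self pp)
  have hρp : ρ (PowerSeries.C (R := R) pp) = 0 := by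
    have : ρ (PowerSeries.C (R := R) pp) = PowerSeries.C (Ideal.Quotient.mk (Ideal.span {pp}) pp) :=
      PowerSeries.map_C _ _
    rw [this, hmkpp, map_zero]
  have hρE : ρ (E : R⟦X⟧) ≠ 0 := by
    intro h0
    have h1 := congrArg (coeff (R := R ⧸ Ideal.span {pp}) E.natDegree) h0
    rw [PowerSeries.coeff_map, Polynomial.coeff_coe, hEmonic.coeff_natDegree, map_one,
      map_zero] at h1
    exact one_ne_zero h1
  have hdetA : ρ A.det ≠ 0 := by
    intro h0
    have h2 := congrArg ρ hdet
    simp only [map_mul, map_pow, h0] at h2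
    have hrhs : ((ρ (E : R⟦X⟧)) ^ 2 * ρ (c : R⟦X⟧)) ^ (Fintype.card ι) * ρ (φ G.det) ≠ 0 :=
      mul_ne_zero (pow_ne_zero _ (mul_ne_zero (pow_ne_zero _ hρE) (c.isUnit.map ρ).ne_zero))
        ((hGdet.map φ).map ρ).ne_zero
    exact hrhs (by linear_combination -h2)
  have hCppne : (PowerSeries.C (R := R) pp) ≠ 0 := by
    intro h
    exact hppne (by simpa using congrArg (constantCoeff (R := R)) h)
  -- ====== part 2 : p-torsion-freeness ======
  have part2 : ∀ x : 𝔐, (PowerSeries.C (R := R) pp) • x ∈ M' → x ∈ M' := by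
    intro x hx
    rw [hM'] at hx
    rw [hM']
    rw [smul_smul] at hx
    obtain ⟨w, hw⟩ := (hmem _).mp hx
    have hco : ∀ i, (A.mulVec w) i =
        ((E : R⟦X⟧) * PowerSeries.C (R := R) pp) * (b.repr x i) := by
      intro i
      have h1 := congrArg (fun z => b.repr z i) hw
      simp only [map_sum, map_smul, Finsupp.coe_finset_sum, Finset.sum_apply,
        Finsupp.smul_apply, smul_eq_mul] at h1
      rw [Matrix.mulVec, ← h1]
      simp only [dotProduct, hA]
      apply Finset.sum_congr rfl
      intro j _
      ring
    have hadj : ∀ j, A.det * w j = ((E : R⟦X⟧) * PowerSeries.C (R := R) pp) *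
        ((A.adjugate.mulVec (fun i => b.repr x i)) j) := by
      have h1 : A.adjugate.mulVec (A.mulVec w) = A.det • w := by
        rw [Matrix.mulVec_mulVec, Matrix.adjugate_mul, Matrix.smul_mulVec,
          Matrix.one_mulVec]
      intro j
      have h2 := congrArg (fun v => v j) h1
      simp only [Pi.smul_apply, smul_eq_mul] at h2
      rw [← h2]
      have h3 : A.mulVec w = ((E : R⟦X⟧) * PowerSeries.C (R := R) pp) • (fun i => b.repr x i) := by
        funext i
        rw [hco i]
        simp [Pi.smul_apply, smul_eq_mul]
      rw [h3, Matrix.mulVec_smul]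
      simp [Pi.smul_apply, smul_eq_mul]
    have hdvd : ∀ j, (PowerSeries.C (R := R) pp) ∣ w j := by
      intro j
      have h4 := congrArg ρ (hadj j)
      simp only [map_mul, hρp, mul_zero, zero_mul] at h4
      have h5 : ρ (w j) = 0 := (mul_eq_zero.mp h4).resolve_left hdetA
      apply stmt14aux_Cdvd
      intro n
      have h6 := congrArg (coeff n) h5
      rw [PowerSeries.coeff_map, map_zero] at h6
      rw [← Ideal.mem_span_singleton]
      exact Ideal.Quotient.eq_zero_iff_mem.mp h6
    choose w' hw' using hdvd
    have hsum : ∑ j, w j • F (b j) = (PowerSeries.C (R := R) pp) • ∑ j, w' j • F (b j) := by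
      rw [Finset.smul_sum]
      apply Finset.sum_congr rfl
      intro j _
      rw [hw' j, mul_smul]
    have hxeq : (PowerSeries.C (R := R) pp) • ((E : R⟦X⟧) • x) =
        (PowerSeries.C (R := R) pp) • (∑ j, w' j • F (b j)) := by
      rw [← hsum, hw, smul_smul, mul_comm]
    have heq2 := smul_right_injective 𝔐 hCppne hxeq
    exact (hmem _).mpr ⟨w', heq2.symm⟩
  refine ⟨part1, part2, ?_⟩
  -- ====== part 3 ======
  by_cases hdeg : E.natDegree = 0
  · -- degenerate case `E = 1`
    have hE1 : E = 1 := hEmonic.natDegree_eq_zero.mp hdeg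
    have hES : (E : R⟦X⟧) = 1 := by rw [hE1]; simp
    have hMtop : M' = ⊤ := by
      rw [eq_top_iff]
      intro x _
      rw [hM', hES, one_smul]
      have hh := hheight x
      rwa [hES, one_pow, one_smul] at hh
    haveI hsub : Subsingleton (𝔐 ⧸ M') :=
      Submodule.Quotient.subsingleton_iff.mpr hMtop
    have htors : Module.IsTorsionBySet R⟦X⟧ (𝔐 ⧸ M')
        ((Ideal.span {(E : R⟦X⟧)} : Ideal R⟦X⟧) : Set R⟦X⟧) :=
      fun x a => Subsingleton.elim _ _
    refine ⟨htors, ?_, ?_⟩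
    · letI := htors.module
      exact Module.Free.of_subsingleton _ _
    · letI := htors.module
      refine ⟨⟨∅, ?_⟩⟩
      rw [Submodule.eq_top_iff']
      intro x
      rw [Subsingleton.elim x 0]
      exact Submodule.zero_mem _
  · -- main case : `𝔖 ⧸ (E)` is a DVR
    have he : 0 < E.natDegree := Nat.pos_of_ne_zero hdeg
    have hmax : IsLocalRing.maximalIdeal R = Ideal.span {pp} :=
      (IsDiscreteValuationRing.irreducible_iff_uniformizer pp).mp hp
    obtain ⟨cf, hcf⟩ : ∃ cf : ℕ → R, ∀ i < E.natDegree, E.coeff i = pp * cf i := by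
      have hcm : ∀ i, i < E.natDegree → pp ∣ E.coeff i := by
        intro i hi
        have := hEis.mem hi
        rwa [Ideal.mem_span_singleton] at this
      choose f hf using hcm
      exact ⟨fun i => if h : i < E.natDegree then f i h else 0,
        fun i hi => by simp only [dif_pos hi]; exact hf i hi⟩
    have hc0 : IsUnit (cf 0) := by
      by_contra hne
      have h0mem : cf 0 ∈ Ideal.span {pp} := by
        rw [← hmax]
        exact hne
      rw [Ideal.mem_span_singleton] at h0mem
      obtain ⟨t, ht⟩ := h0mem
      apply hEis.notMem
      rw [show Ideal.span {pp} ^ 2 = Ideal.span {pp ^ 2} by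
        rw [Ideal.span_singleton_pow], Ideal.mem_span_singleton]
      exact ⟨t, by rw [hcf 0 he, ht]; ring⟩
    have ha0 : E.coeff 0 ≠ 0 := by
      rw [hcf 0 he]
      exact mul_ne_zero hppne hc0.ne_zero
    have hconstE : constantCoeff (R := R) (E : R⟦X⟧) = E.coeff 0 := by
      rw [← coeff_zero_eq_constantCoeff_apply, Polynomial.coeff_coe]
    have hEne : constantCoeff (R := R) (E : R⟦X⟧) ≠ 0 := by rw [hconstE]; exact ha0
    have hEnotunit : ¬ IsUnit (E : R⟦X⟧) := by
      rw [PowerSeries.isUnit_iff_constantCoeff, hconstE, hcf 0 he]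
      intro hu
      exact hp.not_isUnit (isUnit_of_mul_isUnit_left hu)
    -- the series T with E = X^e + pp•T
    letI T : R⟦X⟧ := ∑ i ∈ Finset.range E.natDegree, PowerSeries.C (R := R) (cf i) * (X : R⟦X⟧) ^ i
    have hTcoeff : ∀ n, coeff (R := R) n T = if n < E.natDegree then cf n else 0 := by
      intro n
      rw [show T = ∑ i ∈ Finset.range E.natDegree, PowerSeries.C (R := R) (cf i) * (X : R⟦X⟧) ^ i
        from rfl, map_sum]
      simp only [PowerSeries.coeff_C_mul, PowerSeries.coeff_X_pow, mul_ite, mul_one, mul_zero]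
      rw [Finset.sum_ite_eq (Finset.range E.natDegree) n cf]
      simp [Finset.mem_range]
    have hET : (E : R⟦X⟧) = (X : R⟦X⟧) ^ E.natDegree + PowerSeries.C (R := R) pp * T := by
      ext n
      rw [Polynomial.coeff_coe, map_add, PowerSeries.coeff_X_pow, PowerSeries.coeff_C_mul,
        hTcoeff]
      rcases lt_trichotomy n E.natDegree with h | h | h
      · rw [if_neg h.ne, if_pos h, hcf n h]; ring
      · rw [h, hEmonic.coeff_natDegree, if_pos rfl, if_neg (lt_irrefl _)]; ring
      · rw [Polynomial.coeff_eq_zero_of_natDegree_lt h, if_neg h.ne', if_neg (by omega)]; ring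
    -- the quotient ring
    letI π : R⟦X⟧ →+* R⟦X⟧ ⧸ Ideal.span {(E : R⟦X⟧)} :=
      Ideal.Quotient.mk (Ideal.span {(E : R⟦X⟧)})
    have hπE : π (E : R⟦X⟧) = 0 :=
      Ideal.Quotient.eq_zero_iff_mem.mpr (Ideal.mem_span_singleton_self _)
    have hker : ∀ f : R⟦X⟧, π f = 0 ↔ (E : R⟦X⟧) ∣ f := by
      intro f
      rw [show π f = Ideal.Quotient.mk (Ideal.span {(E : R⟦X⟧)}) f from rfl,
        Ideal.Quotient.eq_zero_iff_mem, Ideal.mem_span_singleton]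
    have hrel : π (PowerSeries.C (R := R) pp) * π T = - (π X) ^ E.natDegree := by
      have h1 := congrArg π hET
      rw [hπE, map_add, map_mul, map_pow] at h1
      linear_combination -h1
    have hTunit : IsUnit (π T) := by
      apply IsUnit.map
      rw [PowerSeries.isUnit_iff_constantCoeff, ← coeff_zero_eq_constantCoeff_apply,
        hTcoeff, if_pos he]
      exact hc0
    have hXpow : ∀ m : ℕ, (π X) ^ m ≠ 0 := by
      intro m hm
      rw [← map_pow, hker] at hm
      obtain ⟨g, hg⟩ := hm
      have hEg : (E : R⟦X⟧) * g = (X : R⟦X⟧) ^ m * 1 := by rw [mul_one, ← hg]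
      obtain ⟨t, rfl⟩ := stmt14aux_Edvd _ hEne m g 1 hEg
      have hXm : (X : R⟦X⟧) ^ m ≠ 0 := pow_ne_zero _ PowerSeries.X_ne_zero
      have h1 : (1 : R⟦X⟧) = (E : R⟦X⟧) * t := by
        apply mul_left_cancel₀ hXm
        rw [mul_one]
        linear_combination hg
      exact hEnotunit (IsUnit.of_mul_eq_one t h1.symm)
    have h10 : (1 : R⟦X⟧ ⧸ Ideal.span {(E : R⟦X⟧)}) ≠ 0 := by
      have h11 := hXpow 0
      rwa [pow_zero] at h11
    haveI : Nontrivial (R⟦X⟧ ⧸ Ideal.span {(E : R⟦X⟧)}) := ⟨⟨1, 0, h10⟩⟩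
    obtain ⟨Tu, hTu⟩ := hTunit
    have hpX : π (PowerSeries.C (R := R) pp) = (π X) ^ E.natDegree * (-(↑Tu⁻¹ : _)) := by
      have h1 : π (PowerSeries.C (R := R) pp) * π T * (↑Tu⁻¹ : _) =
          -(π X) ^ E.natDegree * (↑Tu⁻¹ : _) := by rw [hrel]
      rw [← hTu, mul_assoc, Units.mul_inv, mul_one] at h1
      rw [h1]
      ring
    -- units in the quotient
    have hunit : ∀ y : R⟦X⟧ ⧸ Ideal.span {(E : R⟦X⟧)}, y ∉ Ideal.span {π X} → IsUnit y := by
      intro y hy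
      obtain ⟨f, rfl⟩ := Ideal.Quotient.mk_surjective y
      by_cases hu : IsUnit (constantCoeff (R := R) f)
      · exact ((PowerSeries.isUnit_iff_constantCoeff).mpr hu).map π
      · exfalso
        apply hy
        rw [Ideal.mem_span_singleton]
        have hf0 : pp ∣ constantCoeff (R := R) f := by
          rw [← Ideal.mem_span_singleton, ← hmax]
          exact hu
        obtain ⟨d, hd⟩ := hf0
        have hsub := PowerSeries.sub_const_eq_X_mul_shift f
        have hfeq : f = PowerSeries.C (R := R) pp * PowerSeries.C (R := R) d +
            X * (PowerSeries.mk fun n => coeff (R := R) (n + 1) f) := by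
          have h2 : f = PowerSeries.C (R := R) (constantCoeff (R := R) f) +
              X * (PowerSeries.mk fun n => coeff (R := R) (n + 1) f) := by linear_combination hsub
          conv_lhs => rw [h2]
          rw [hd, map_mul]
        rw [show Ideal.Quotient.mk (Ideal.span {(E : R⟦X⟧)}) f = π f from rfl, hfeq,
          map_add, map_mul, map_mul, hpX]
        apply dvd_add
        · exact dvd_mul_of_dvd_left (dvd_mul_of_dvd_left (dvd_pow_self (π X) hdeg) _) _
        · exact dvd_mul_right _ _
    -- the intersection of the powers of (π X) is zero
    have hzero : ∀ y : R⟦X⟧ ⧸ Ideal.span {(E : R⟦X⟧)}, (∀ n, (π X) ^ n ∣ y) → y = 0 := by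
      intro y hy
      obtain ⟨f, rfl⟩ := Ideal.Quotient.mk_surjective y
      rw [show Ideal.Quotient.mk (Ideal.span {(E : R⟦X⟧)}) f = π f from rfl, hker]
      apply stmt14aux_inter _ _ hEne
      intro n
      obtain ⟨z, hz⟩ := hy n
      obtain ⟨g, rfl⟩ := Ideal.Quotient.mk_surjective z
      have h1 : π (f - X ^ n * g) = 0 := by
        rw [map_sub, map_mul, map_pow]
        rw [show Ideal.Quotient.mk (Ideal.span {(E : R⟦X⟧)}) f = π f from rfl] at hz
        rw [show Ideal.Quotient.mk (Ideal.span {(E : R⟦X⟧)}) g = π g from rfl] at hz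
        rw [hz]
        ring
      rw [hker] at h1
      obtain ⟨h, hh⟩ := h1
      exact ⟨g, h, by linear_combination hh⟩
    -- decomposition of nonzero elements
    have hdecomp : ∀ y : R⟦X⟧ ⧸ Ideal.span {(E : R⟦X⟧)}, y ≠ 0 →
        ∃ (n : ℕ) (u : R⟦X⟧ ⧸ Ideal.span {(E : R⟦X⟧)}), IsUnit u ∧ y = (π X) ^ n * u := by
      intro y hy
      have hex : ∃ n, ¬ (π X) ^ n ∣ y := by
        by_contra hall
        push_neg at hall
        exact hy (hzero y hall)
      obtain ⟨m, hm⟩ : ∃ m, Nat.find hex = m + 1 := by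
        refine ⟨Nat.find hex - 1, ?_⟩
        have h0 : Nat.find hex ≠ 0 := by
          intro h0
          apply Nat.find_spec hex
          rw [h0, pow_zero]
          exact one_dvd y
        omega
      have hdvd : (π X) ^ m ∣ y := by
        have := Nat.find_min hex (m := m) (by omega)
        rwa [not_not] at this
      obtain ⟨u, hu⟩ := hdvd
      refine ⟨m, u, ?_, hu⟩
      apply hunit u
      intro humem
      rw [Ideal.mem_span_singleton] at humem
      obtain ⟨v, hv⟩ := humem
      apply Nat.find_spec hex
      rw [hm, hu, hv, pow_succ]
      exact ⟨v, by ring⟩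
    haveI : NoZeroDivisors (R⟦X⟧ ⧸ Ideal.span {(E : R⟦X⟧)}) := by
      constructor
      intro a b hab
      by_contra hne
      push_neg at hne
      obtain ⟨hna, hnb⟩ := hne
      obtain ⟨n, u, hu, rfl⟩ := hdecomp a hna
      obtain ⟨m, v, hv, rfl⟩ := hdecomp b hnb
      have h1 : (π X) ^ (n + m) * (u * v) = 0 := by
        rw [pow_add]
        linear_combination hab
      have h2 : (π X) ^ (n + m) = 0 := (IsUnit.mul_left_eq_zero (hu.mul hv)).mp h1
      exact hXpow (n + m) h2
    haveI : IsDomain (R⟦X⟧ ⧸ Ideal.span {(E : R⟦X⟧)}) := NoZeroDivisors.to_isDomain _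
    have hXne : (π X) ≠ 0 := by
      have h11 := hXpow 1
      rwa [pow_one] at h11
    have hXnotunit : ¬ IsUnit (π X) := by
      intro hu
      have h1 : IsUnit (π (PowerSeries.C (R := R) pp)) := by
        rw [hpX]
        exact (hu.pow E.natDegree).mul (Tu⁻¹).isUnit.neg
      obtain ⟨z, hz⟩ := h1.exists_right_inv
      obtain ⟨g, rfl⟩ := Ideal.Quotient.mk_surjective z
      have h2 : π (PowerSeries.C (R := R) pp * g - 1) = 0 := by
        rw [map_sub, map_mul, map_one]
        rw [show Ideal.Quotient.mk (Ideal.span {(E : R⟦X⟧)}) g = π g from rfl] at hz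
        rw [hz]
        ring
      rw [hker] at h2
      obtain ⟨h, hh⟩ := h2
      have hcc := congrArg (constantCoeff (R := R)) hh
      simp only [map_sub, map_mul, map_one, PowerSeries.constantCoeff_C, hconstE] at hcc
      rw [hcf 0 he] at hcc
      apply hp.not_isUnit
      refine IsUnit.of_mul_eq_one (a := pp)
        (constantCoeff (R := R) g - cf 0 * constantCoeff (R := R) h) ?_
      linear_combination hcc
    have hXirr : Irreducible (π X) := by
      refine ⟨hXnotunit, ?_⟩
      intro a b hab
      by_contra hne
      push_neg at hne
      obtain ⟨hna, hnb⟩ := hne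
      have hamem : a ∈ Ideal.span {π X} := by
        by_contra h; exact hna (hunit a h)
      have hbmem : b ∈ Ideal.span {π X} := by
        by_contra h; exact hnb (hunit b h)
      rw [Ideal.mem_span_singleton] at hamem hbmem
      obtain ⟨a', ha⟩ := hamem
      obtain ⟨b', hb⟩ := hbmem
      rw [ha, hb] at hab
      have h1 : π X * (1 - π X * (a' * b')) = 0 := by linear_combination hab
      rcases mul_eq_zero.mp h1 with h | h
      · exact hXne h
      · have h2 : (1 : R⟦X⟧ ⧸ Ideal.span {(E : R⟦X⟧)}) = π X * (a' * b') := by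
          linear_combination h
        exact hXnotunit (IsUnit.of_mul_eq_one _ h2.symm)
    haveI : IsDiscreteValuationRing (R⟦X⟧ ⧸ Ideal.span {(E : R⟦X⟧)}) := by
      apply IsDiscreteValuationRing.ofHasUnitMulPowIrreducibleFactorization
      refine ⟨π X, hXirr, ?_⟩
      intro y hy
      obtain ⟨n, u, hu, hyu⟩ := hdecomp y hy
      exact ⟨n, hu.unit, by rw [hyu, IsUnit.unit_spec]⟩
    -- torsion
    have htors : Module.IsTorsionBySet R⟦X⟧ (𝔐 ⧸ M')
        ((Ideal.span {(E : R⟦X⟧)} : Ideal R⟦X⟧) : Set R⟦X⟧) := by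
      intro m a
      obtain ⟨x, rfl⟩ := Submodule.Quotient.mk_surjective M' m
      obtain ⟨r, hr⟩ := Ideal.mem_span_singleton.mp a.2
      rw [← Submodule.Quotient.mk_smul, Submodule.Quotient.mk_eq_zero, hr, mul_comm, mul_smul]
      exact Submodule.smul_mem _ r (part1 x)
    letI := htors.module
    haveI hfin : Module.Finite (R⟦X⟧ ⧸ Ideal.span {(E : R⟦X⟧)}) (𝔐 ⧸ M') :=
      Module.Finite.of_restrictScalars_finite R⟦X⟧ _ _
    have hitern : ∀ (n : ℕ) (x : 𝔐), ((PowerSeries.C (R := R) pp) ^ n) • x ∈ M' → x ∈ M' := by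
      intro n
      induction n with
      | zero => intro x hx; simpa using hx
      | succ n ih =>
        intro x hx
        rw [pow_succ, mul_smul] at hx
        exact part2 x (ih _ hx)
    haveI : NoZeroSMulDivisors (R⟦X⟧ ⧸ Ideal.span {(E : R⟦X⟧)}) (𝔐 ⧸ M') := by
      constructor
      intro r m hrm
      by_contra hne
      push_neg at hne
      obtain ⟨hr, hm⟩ := hne
      obtain ⟨n, u, hu, rfl⟩ := hdecomp r hr
      obtain ⟨uu, rfl⟩ := hu
      have h1 : ((π X) ^ n) • m = 0 := by
        calc ((π X) ^ n) • m = ((π X) ^ n * ↑uu * ↑uu⁻¹) • m := by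
              rw [mul_assoc, Units.mul_inv, mul_one]
          _ = (↑uu⁻¹ : R⟦X⟧ ⧸ Ideal.span {(E : R⟦X⟧)}) • (((π X) ^ n * ↑uu) • m) := by
              rw [mul_comm, mul_smul]
          _ = 0 := by rw [hrm, smul_zero]
      have hge : n ≤ E.natDegree * n := Nat.le_mul_of_pos_left n he
      have h2 : ((π (PowerSeries.C (R := R) pp)) ^ n) • m = 0 := by
        have hexp : (π (PowerSeries.C (R := R) pp)) ^ n =
            ((π X) ^ (E.natDegree * n - n) * (-(↑Tu⁻¹ : _)) ^ n) * (π X) ^ n := by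
          rw [hpX, mul_pow, ← pow_mul, mul_assoc,
            show (-(↑Tu⁻¹ : _)) ^ n * (π X) ^ n = (π X) ^ n * (-(↑Tu⁻¹ : _)) ^ n by ring,
            ← mul_assoc, ← pow_add, Nat.sub_add_cancel hge]
        rw [hexp, mul_smul, h1, smul_zero]
      have h3 : ((PowerSeries.C (R := R) pp) ^ n) • m = 0 := by
        have h4 := Module.IsTorsionBySet.mk_smul htors ((PowerSeries.C (R := R) pp) ^ n) m
        rw [← h4, map_pow]
        exact h2
      obtain ⟨x, rfl⟩ := Submodule.Quotient.mk_surjective M' m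
      apply hm
      rw [Submodule.Quotient.mk_eq_zero]
      apply hitern n x
      rw [← Submodule.Quotient.mk_eq_zero (p := M'), Submodule.Quotient.mk_smul]
      exact h3
    exact ⟨htors, inferInstance, hfin⟩

end Aux


/-- Let `𝔖 = W[[u]]` over the Witt vectors `W = W(k)` of a perfect field `k` of characteristic
`p`, with Frobenius `φ` (the Witt-vector Frobenius on coefficients and `u ↦ u^p`), and let
`E(u)` be an Eisenstein polynomial.  Let `𝔐` be a finite free `𝔖`-module with a `φ`-semilinear
map `F` of height `≤ 2` (the `𝔖`-span of the image of `F`, i.e. the image of `1 ⊗ φ`, contains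
`E(u)²𝔐`), admitting a perfect symmetric `𝔖`-bilinear pairing compatible with Frobenius up to
the twist `E(u)²` and a unit.  Set `𝔐' = {x ∈ 𝔐 : E(u)·x ∈ Im(1⊗φ)}`.  Then `𝔐/𝔐'` is killed
by `E(u)` and is `p`-torsion-free; consequently `𝔐/𝔐'` is a finite free module over
`𝔖/E(u) ≅ 𝒪_K`. -/
theorem stmt14 (p : ℕ) [Fact p.Prime]
    (k : Type*) [Field k] [CharP k p] [PerfectRing k p]
    (φ : (WittVector p k)⟦X⟧ →+* (WittVector p k)⟦X⟧)
    (hφC : ∀ a : WittVector p k,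
      φ (PowerSeries.C (R := WittVector p k) a) = PowerSeries.C (R := WittVector p k) (WittVector.frobenius a))
    (hφX : φ (PowerSeries.X : (WittVector p k)⟦X⟧) = (PowerSeries.X : (WittVector p k)⟦X⟧) ^ p)
    (E : Polynomial (WittVector p k)) (hEmonic : E.Monic)
    (hEis : E.IsEisensteinAt (Ideal.span {(p : WittVector p k)}))
    (𝔐 : Type*) [AddCommGroup 𝔐] [Module (WittVector p k)⟦X⟧ 𝔐]
    [Module.Finite (WittVector p k)⟦X⟧ 𝔐] [Module.Free (WittVector p k)⟦X⟧ 𝔐]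
    (F : 𝔐 →ₛₗ[φ] 𝔐)
    -- `F` has height `≤ 2`: the cokernel of `1 ⊗ φ` is killed by `E(u)²`
    (hheight : ∀ x : 𝔐, ((E : (WittVector p k)⟦X⟧) ^ 2) • x ∈
      Submodule.span (WittVector p k)⟦X⟧ (Set.range F))
    -- perfect symmetric pairing, compatible with Frobenius up to `E(u)²` and a unit
    (B : 𝔐 →ₗ[(WittVector p k)⟦X⟧] 𝔐 →ₗ[(WittVector p k)⟦X⟧] (WittVector p k)⟦X⟧)
    (hBsymm : ∀ x y : 𝔐, B x y = B y x)
    (hBperf : Function.Bijective B)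
    (c : ((WittVector p k)⟦X⟧)ˣ)
    (hBF : ∀ x y : 𝔐,
      B (F x) (F y) = (E : (WittVector p k)⟦X⟧) ^ 2 * (c : (WittVector p k)⟦X⟧) * φ (B x y))
    (M' : Submodule (WittVector p k)⟦X⟧ 𝔐)
    (hM' : ∀ x : 𝔐, x ∈ M' ↔
      (E : (WittVector p k)⟦X⟧) • x ∈ Submodule.span (WittVector p k)⟦X⟧ (Set.range F)) :
    (∀ x : 𝔐, (E : (WittVector p k)⟦X⟧) • x ∈ M') ∧
    (∀ x : 𝔐, (p : (WittVector p k)⟦X⟧) • x ∈ M' → x ∈ M') ∧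
    (∃ h : Module.IsTorsionBySet (WittVector p k)⟦X⟧ (𝔐 ⧸ M')
        ((Ideal.span {(E : (WittVector p k)⟦X⟧)} : Ideal (WittVector p k)⟦X⟧) : Set (WittVector p k)⟦X⟧),
      @Module.Free ((WittVector p k)⟦X⟧ ⧸ Ideal.span {(E : (WittVector p k)⟦X⟧)})
          (𝔐 ⧸ M') _ _ h.module ∧
      @Module.Finite ((WittVector p k)⟦X⟧ ⧸ Ideal.span {(E : (WittVector p k)⟦X⟧)})
          (𝔐 ⧸ M') _ _ h.module) := by
  haveI := WittVector.isDiscreteValuationRing (p := p) (k := k)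
  have hirr : Irreducible ((p : ℕ) : WittVector p k) := WittVector.irreducible p
  obtain ⟨h1, h2, h3⟩ := stmt14_aux ((p : ℕ) : WittVector p k) hirr φ E hEmonic hEis 𝔐 F
    hheight B hBperf c hBF M' hM'
  refine ⟨h1, ?_, h3⟩
  intro x hx
  apply h2 x
  have hCp : (PowerSeries.C (R := WittVector p k)) ((p : ℕ) : WittVector p k) =
      ((p : ℕ) : (WittVector p k)⟦X⟧) := map_natCast (PowerSeries.C (R := WittVector p k)) p
  rw [hCp]
  exact hx
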